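/- If F ∈ 𝓕 satisfies the class-J condition for n (i.e., lim_{K→∞} inf_{x≥0} P(X_{2,n} ≤ K | Sₙ > x) = 1), then it satisfies the class-J condition for n+1: lim_{K→∞} inf_{x≥0} P(X_{2,n+1} ≤ K | S_{n+1} > x) = 1. -/

import Mathlib

open MeasureTheory Filter Set
open scoped ENNReal

/-- `P` under the law of `n` i.i.d. copies with common law `μ`. -/
noncomputable def piP (μ : Measure ℝ) (n : ℕ) (A : Set (Fin n → ℝ)) : ℝ :=
  ((Measure.pi fun _ : Fin n => μ) A).toReal

/-- The event `Sₙ > x`. -/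
def SumGt {n : ℕ} (x : ℝ) (v : Fin n → ℝ) : Prop := x < ∑ i, v i

/-- The event that the second largest of `v 0, …, v (n-1)` is `≤ K`. -/
def SecondLe {n : ℕ} (K : ℝ) (v : Fin n → ℝ) : Prop :=
  ∀ i j : Fin n, i ≠ j → v i ≤ K ∨ v j ≤ K

/-- Conditional probability `P(A | Sₙ > x)`. -/
noncomputable def condN (μ : Measure ℝ) (n : ℕ) (A : Set (Fin n → ℝ)) (x : ℝ) : ℝ :=
  piP μ n (A ∩ {v | SumGt x v}) / piP μ n {v | SumGt x v}

namespace Stmt4Aux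

lemma measurableSet_sumGt {n : ℕ} (x : ℝ) : MeasurableSet {v : Fin n → ℝ | SumGt x v} := by
  have hm : Measurable fun v : Fin n → ℝ => ∑ i, v i :=
    Finset.measurable_sum _ (fun i _ => measurable_pi_apply i)
  exact measurableSet_lt measurable_const hm

lemma measurableSet_secondLe {n : ℕ} (K : ℝ) :
    MeasurableSet {v : Fin n → ℝ | SecondLe K v} := by
  have : {v : Fin n → ℝ | SecondLe K v}
      = ⋂ i, ⋂ j, {v : Fin n → ℝ | i ≠ j → (v i ≤ K ∨ v j ≤ K)} := by
    ext v; simp [SecondLe, Set.mem_iInter]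
  rw [this]
  refine MeasurableSet.iInter fun i => MeasurableSet.iInter fun j => ?_
  by_cases hij : i = j
  · have : {v : Fin n → ℝ | i ≠ j → (v i ≤ K ∨ v j ≤ K)} = Set.univ := by
      ext v; simp [hij]
    rw [this]; exact MeasurableSet.univ
  · have : {v : Fin n → ℝ | i ≠ j → (v i ≤ K ∨ v j ≤ K)}
        = {v | v i ≤ K} ∪ {v | v j ≤ K} := by
      ext v; simp [hij]
    rw [this]
    exact (measurableSet_le (measurable_pi_apply i) measurable_const).union
      (measurableSet_le (measurable_pi_apply j) measurable_const)

lemma pi_sumGt_pos (μ : Measure ℝ) [IsProbabilityMeasure μ]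
    (hub : ∀ x : ℝ, 0 < μ (Set.Ioi x)) {m : ℕ} (hm : 0 < m) (x : ℝ) :
    0 < (Measure.pi fun _ : Fin m => μ) {v | SumGt x v} := by
  have hsub : (Set.univ.pi fun _ : Fin m => Set.Ioi (x / m)) ⊆ {v : Fin m → ℝ | SumGt x v} := by
    intro v hv
    simp only [Set.mem_pi, Set.mem_univ, Set.mem_Ioi, forall_true_left] at hv
    have : ∑ _i : Fin m, (x / m) < ∑ i, v i :=
      Finset.sum_lt_sum_of_nonempty (Finset.univ_nonempty_iff.mpr ⟨⟨0, hm⟩⟩)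
        (fun i _ => hv i)
    have hx : ∑ _i : Fin m, (x / m) = x := by
      rw [Finset.sum_const, Finset.card_univ, Fintype.card_fin, nsmul_eq_mul]
      field_simp
    rw [hx] at this
    exact this
  refine lt_of_lt_of_le ?_ (measure_mono hsub)
  rw [Measure.pi_pi]
  exact CanonicallyOrderedAdd.prod_pos.mpr fun i _ => hub _

lemma pi_ae_nonneg (μ : Measure ℝ) [IsProbabilityMeasure μ] (hnn : μ (Set.Iio 0) = 0) (m : ℕ) :
    ∀ᵐ v ∂(Measure.pi fun _ : Fin m => μ), ∀ i, 0 ≤ v i := by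
  rw [MeasureTheory.ae_all_iff]
  intro i
  rw [ae_iff]
  have : {v : Fin m → ℝ | ¬ 0 ≤ v i} = Function.eval i ⁻¹' Set.Iio 0 := by
    ext v; simp [not_le]
  rw [this]
  exact Measure.pi_eval_preimage_null _ hnn

variable {α : Type*} [MeasurableSpace α]

lemma inter_toReal_sum (ν : Measure α) [IsProbabilityMeasure ν]
    {A B : Set α} (hA : MeasurableSet A) :
    (ν (A ∩ B)).toReal + (ν (Aᶜ ∩ B)).toReal = (ν B).toReal := by
  have h2 := measure_inter_add_diff (μ := ν) B hA
  rw [Set.inter_comm, Set.diff_eq, Set.inter_comm B Aᶜ] at h2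
  have h3 := congrArg ENNReal.toReal h2
  rwa [ENNReal.toReal_add (measure_ne_top ν _) (measure_ne_top ν _)] at h3

lemma ratio_to_measure (ν : Measure α) [IsProbabilityMeasure ν]
    {A B : Set α} (hA : MeasurableSet A) (hB0 : ν B ≠ 0)
    {δ : ℝ} (hδ : 0 ≤ δ)
    (hcond : 1 - δ ≤ (ν (A ∩ B)).toReal / (ν B).toReal) :
    ν (Aᶜ ∩ B) ≤ ENNReal.ofReal δ * ν B := by
  have hfin : ∀ s : Set α, ν s ≠ ⊤ := fun s => measure_ne_top ν s
  set a := (ν (A ∩ B)).toReal with ha'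
  set c := (ν (Aᶜ ∩ B)).toReal with hc'
  set b := (ν B).toReal with hb'
  have hb : 0 < b := ENNReal.toReal_pos hB0 (hfin B)
  have hsum : a + c = b := inter_toReal_sum ν hA
  have ha : (1 - δ) * b ≤ a := by
    calc (1 - δ) * b ≤ (a / b) * b := mul_le_mul_of_nonneg_right hcond hb.le
      _ = a := by field_simp
  have hc : c ≤ δ * b := by nlinarith
  calc ν (Aᶜ ∩ B) = ENNReal.ofReal c := (ENNReal.ofReal_toReal (hfin _)).symm
    _ ≤ ENNReal.ofReal (δ * b) := ENNReal.ofReal_le_ofReal hc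
    _ = ENNReal.ofReal δ * ENNReal.ofReal b := ENNReal.ofReal_mul hδ
    _ = ENNReal.ofReal δ * ν B := by rw [ENNReal.ofReal_toReal (hfin B)]

lemma measure_to_ratio (ν : Measure α) [IsProbabilityMeasure ν]
    {A B : Set α} (hA : MeasurableSet A) (hB0 : ν B ≠ 0)
    {δ : ℝ} (hδ : 0 ≤ δ)
    (hm : ν (Aᶜ ∩ B) ≤ ENNReal.ofReal δ * ν B) :
    1 - δ ≤ (ν (A ∩ B)).toReal / (ν B).toReal := by
  have hfin : ∀ s : Set α, ν s ≠ ⊤ := fun s => measure_ne_top ν s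
  set a := (ν (A ∩ B)).toReal with ha'
  set c := (ν (Aᶜ ∩ B)).toReal with hc'
  set b := (ν B).toReal with hb'
  have hb : 0 < b := ENNReal.toReal_pos hB0 (hfin B)
  have hsum : a + c = b := inter_toReal_sum ν hA
  have hc : c ≤ δ * b := by
    have h1 : (ν (Aᶜ ∩ B)).toReal ≤ (ENNReal.ofReal δ * ν B).toReal :=
      ENNReal.toReal_mono (ENNReal.mul_ne_top ENNReal.ofReal_ne_top (hfin B)) hm
    rwa [ENNReal.toReal_mul, ENNReal.toReal_ofReal hδ] at h1
  have : (1 - δ) * b ≤ a := by nlinarith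
  calc 1 - δ = ((1 - δ) * b) / b := by field_simp
    _ ≤ a / b := by gcongr

lemma core (μ : Measure ℝ) [IsProbabilityMeasure μ] (hnn : μ (Set.Iio 0) = 0)
    (n : ℕ) (hn : 2 ≤ n) {K : ℝ} (hK : 0 < K) {δ' : ℝ≥0∞} (hδ' : δ' ≠ ⊤)
    (Hyp : ∀ y : ℝ, 0 ≤ y →
      (Measure.pi fun _ : Fin n => μ) ({v | SecondLe K v}ᶜ ∩ {v | SumGt y v})
        ≤ δ' * (Measure.pi fun _ : Fin n => μ) {v | SumGt y v})
    {x : ℝ} (hx : 0 ≤ x) :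
    (Measure.pi fun _ : Fin (n+1) => μ) ({v | SecondLe K v}ᶜ ∩ {v | SumGt x v})
      ≤ (n+1) * δ' * (Measure.pi fun _ : Fin (n+1) => μ) {v | SumGt x v} := by
  classical
  set ν : Measure (Fin n → ℝ) := Measure.pi fun _ : Fin n => μ with hν
  set νs : Measure (Fin (n+1) → ℝ) := Measure.pi fun _ : Fin (n+1) => μ with hνs
  set D : Set (ℝ × (Fin n → ℝ)) :=
    {p | ¬ SecondLe K p.2 ∧ x - p.1 < ∑ j, p.2 j} with hD'
  set Dall : Set (ℝ × (Fin n → ℝ)) := {p | x - p.1 < ∑ j, p.2 j} with hDall'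
  have hmsum : Measurable fun w : Fin n → ℝ => ∑ j, w j :=
    Finset.measurable_sum _ (fun i _ => measurable_pi_apply i)
  have hDallm : MeasurableSet Dall := by
    have : Measurable fun p : ℝ × (Fin n → ℝ) => x - p.1 := measurable_const.sub measurable_fst
    exact measurableSet_lt this (hmsum.comp measurable_snd)
  have hDm : MeasurableSet D := by
    have h1 : MeasurableSet {p : ℝ × (Fin n → ℝ) | ¬ SecondLe K p.2} := by
      have := (measurableSet_secondLe (n := n) K).compl
      exact measurable_snd this
    exact h1.inter hDallm
  have hmp : ∀ i : Fin (n+1),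
      MeasurePreserving (MeasurableEquiv.piFinSuccAbove (fun _ : Fin (n+1) => ℝ) i)
        νs (μ.prod ν) :=
    fun i => measurePreserving_piFinSuccAbove (fun _ : Fin (n+1) => μ) i
  have hsub : {v : Fin (n+1) → ℝ | SecondLe K v}ᶜ ∩ {v | SumGt x v}
      ⊆ ⋃ i : Fin (n+1),
        (MeasurableEquiv.piFinSuccAbove (fun _ : Fin (n+1) => ℝ) i) ⁻¹' D := by
    rintro v ⟨hv1, hv2⟩
    simp only [Set.mem_compl_iff, Set.mem_setOf_eq, SecondLe] at hv1
    push_neg at hv1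
    obtain ⟨i, j, hij, hvi, hvj⟩ := hv1
    have hk : ∃ k : Fin (n+1), k ≠ i ∧ k ≠ j := by
      by_contra hcon
      push_neg at hcon
      have : (Finset.univ : Finset (Fin (n+1))) ⊆ {i, j} := by
        intro k _
        rcases eq_or_ne k i with hk | hk
        · simp [hk]
        · simp [hcon k hk]
      have hcard := Finset.card_le_card this
      simp only [Finset.card_univ, Fintype.card_fin] at hcard
      have : ({i, j} : Finset (Fin (n+1))).card ≤ 2 :=
        Finset.card_insert_le _ _ |>.trans (by simp)
      omega
    obtain ⟨k, hki, hkj⟩ := hk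
    refine Set.mem_iUnion.mpr ⟨k, ?_⟩
    obtain ⟨i', hi'⟩ := Fin.exists_succAbove_eq (Ne.symm hki)
    obtain ⟨j', hj'⟩ := Fin.exists_succAbove_eq (Ne.symm hkj)
    have hij' : i' ≠ j' := by
      intro hcon; apply hij; rw [← hi', ← hj', hcon]
    simp only [Set.mem_preimage, MeasurableEquiv.piFinSuccAbove_apply, hD',
      Set.mem_setOf_eq]
    constructor
    · intro hS2
      rcases hS2 i' j' hij' with h1 | h1
      · simp only [Fin.insertNthEquiv, Equiv.coe_fn_symm_mk, Fin.removeNth, hi'] at h1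
        exact absurd h1 (not_le.mpr hvi)
      · simp only [Fin.insertNthEquiv, Equiv.coe_fn_symm_mk, Fin.removeNth, hj'] at h1
        exact absurd h1 (not_le.mpr hvj)
    · have hs := Fin.sum_univ_succAbove v k
      have : x < ∑ l, v l := hv2
      rw [hs] at this
      have : x - v k < ∑ l, v (k.succAbove l) := by linarith
      simpa [Fin.insertNthEquiv, Fin.removeNth] using this
  have hstep1 : νs ({v | SecondLe K v}ᶜ ∩ {v | SumGt x v})
      ≤ (n+1) * ((μ.prod ν) D) := by
    calc νs ({v | SecondLe K v}ᶜ ∩ {v | SumGt x v})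
        ≤ νs (⋃ i : Fin (n+1),
            (MeasurableEquiv.piFinSuccAbove (fun _ : Fin (n+1) => ℝ) i) ⁻¹' D) :=
          measure_mono hsub
      _ ≤ ∑' i : Fin (n+1),
            νs ((MeasurableEquiv.piFinSuccAbove (fun _ : Fin (n+1) => ℝ) i) ⁻¹' D) :=
          measure_iUnion_le _
      _ = ∑ i : Fin (n+1),
            νs ((MeasurableEquiv.piFinSuccAbove (fun _ : Fin (n+1) => ℝ) i) ⁻¹' D) :=
          tsum_fintype _
      _ = ∑ _i : Fin (n+1), (μ.prod ν) D :=
          Finset.sum_congr rfl fun i _ => (hmp i).measure_preimage hDm.nullMeasurableSet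
      _ = (n+1) * ((μ.prod ν) D) := by
          rw [Finset.sum_const, Finset.card_univ, Fintype.card_fin, nsmul_eq_mul]
          push_cast
          ring
  have hslice : ∀ y : ℝ, Prod.mk y ⁻¹' D
      = ({w : Fin n → ℝ | SecondLe K w}ᶜ ∩ {w | SumGt (x - y) w}) := by
    intro y; ext w
    simp [hD', SumGt]
  have hprodD : (μ.prod ν) D
      = ∫⁻ y, ν ({w : Fin n → ℝ | SecondLe K w}ᶜ ∩ {w | SumGt (x-y) w}) ∂μ := by
    rw [Measure.prod_apply hDm]
    simp_rw [hslice]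
  have hprodDall : (μ.prod ν) Dall = ∫⁻ y, ν {w : Fin n → ℝ | SumGt (x-y) w} ∂μ := by
    rw [Measure.prod_apply hDallm]
    rfl
  have hN : ν {w : Fin n → ℝ | ¬ ∀ i, 0 ≤ w i} = 0 := by
    have := pi_ae_nonneg μ hnn n
    rwa [ae_iff] at this
  have hnonnegae : ∀ᵐ w ∂ν, ∀ i, 0 ≤ w i := pi_ae_nonneg μ hnn n
  have hae : ∀ y : ℝ, ν ({w : Fin n → ℝ | SecondLe K w}ᶜ ∩ {w | SumGt (x-y) w})
      ≤ δ' * ν {w : Fin n → ℝ | SumGt (x-y) w} := by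
    intro y
    rcases le_or_gt y x with hyx | hyx
    · exact Hyp (x - y) (by linarith)
    · have hxy : x - y < 0 := by linarith
      have h1 : ν ({w : Fin n → ℝ | SecondLe K w}ᶜ ∩ {w | SumGt (x-y) w})
          ≤ ν ({w : Fin n → ℝ | SecondLe K w}ᶜ ∩ {w | SumGt (0:ℝ) w}) := by
        apply measure_mono_ae
        filter_upwards [hnonnegae] with w hw hwmem
        refine ⟨hwmem.1, ?_⟩
        have hv1 := hwmem.1
        simp only [Set.mem_compl_iff, Set.mem_setOf_eq, SecondLe] at hv1
        push_neg at hv1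
        obtain ⟨i, j, hij, hvi, hvj⟩ := hv1
        have : (0:ℝ) < ∑ l, w l :=
          lt_of_lt_of_le (lt_trans hK hvi) (Finset.single_le_sum (fun l _ => hw l)
            (Finset.mem_univ i))
        exact this
      have h4 : ν {w : Fin n → ℝ | SumGt (x-y) w} = 1 := by
        rw [← prob_compl_eq_zero_iff (measurableSet_sumGt (x - y))]
        refine measure_mono_null ?_ hN
        intro w hw
        simp only [Set.mem_compl_iff, Set.mem_setOf_eq, SumGt, not_lt] at hw
        intro hcon
        have : (0:ℝ) ≤ ∑ l, w l := Finset.sum_nonneg fun l _ => hcon l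
        linarith
      calc ν ({w : Fin n → ℝ | SecondLe K w}ᶜ ∩ {w | SumGt (x-y) w})
          ≤ ν ({w : Fin n → ℝ | SecondLe K w}ᶜ ∩ {w | SumGt (0:ℝ) w}) := h1
        _ ≤ δ' * ν {w : Fin n → ℝ | SumGt (0:ℝ) w} := Hyp 0 le_rfl
        _ ≤ δ' * 1 := mul_le_mul_right prob_le_one _
        _ = δ' * ν {w : Fin n → ℝ | SumGt (x-y) w} := by rw [h4]
  have hT : (μ.prod ν) D ≤ δ' * (μ.prod ν) Dall := by
    rw [hprodD, hprodDall, ← lintegral_const_mul' _ _ hδ']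
    exact lintegral_mono fun y => hae y
  have hBall : (μ.prod ν) Dall = νs {v | SumGt x v} := by
    rw [← (hmp 0).measure_preimage hDallm.nullMeasurableSet]
    congr 1
    ext v
    have hs := Fin.sum_univ_succAbove v (0 : Fin (n+1))
    simp only [Set.mem_preimage, MeasurableEquiv.piFinSuccAbove_apply, hDall',
      Set.mem_setOf_eq, Fin.insertNthEquiv, Equiv.coe_fn_symm_mk, Fin.removeNth,
      SumGt]
    constructor
    · intro hlt; rw [hs]; linarith
    · intro hlt; rw [hs] at hlt; linarith
  calc νs ({v | SecondLe K v}ᶜ ∩ {v | SumGt x v})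
      ≤ (n+1) * ((μ.prod ν) D) := hstep1
    _ ≤ (n+1) * (δ' * (μ.prod ν) Dall) := mul_le_mul_right hT _
    _ = (n+1) * δ' * νs {v | SumGt x v} := by rw [hBall, mul_assoc]

end Stmt4Aux

open Stmt4Aux in
theorem stmt4 (μ : Measure ℝ) [IsProbabilityMeasure μ]
    (hnn : μ (Set.Iio 0) = 0) (hub : ∀ x : ℝ, 0 < μ (Set.Ioi x))
    (n : ℕ) (hn : 2 ≤ n)
    (h : Tendsto (fun K : ℝ =>
        ⨅ x : Set.Ici (0:ℝ), condN μ n {v | SecondLe K v} (x : ℝ)) atTop (nhds 1)) :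
    Tendsto (fun K : ℝ =>
        ⨅ x : Set.Ici (0:ℝ), condN μ (n + 1) {v | SecondLe K v} (x : ℝ)) atTop (nhds 1) := by
  have hcond_nonneg : ∀ (m : ℕ) (K x : ℝ), 0 ≤ condN μ m {v | SecondLe K v} x :=
    fun m K x => div_nonneg ENNReal.toReal_nonneg ENNReal.toReal_nonneg
  have hcond_le_one : ∀ (m : ℕ) (K x : ℝ), condN μ m {v | SecondLe K v} x ≤ 1 := by
    intro m K x
    apply div_le_one_of_le₀
    · exact ENNReal.toReal_mono (measure_ne_top _ _) (measure_mono Set.inter_subset_right)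
    · exact ENNReal.toReal_nonneg
  have hbdd : ∀ (m : ℕ) (K : ℝ),
      BddBelow (Set.range fun y : Set.Ici (0:ℝ) => condN μ m {v | SecondLe K v} (y : ℝ)) := by
    intro m K
    refine ⟨0, ?_⟩
    rintro r ⟨y, rfl⟩
    exact hcond_nonneg m K y
  have key : ∀ ε : ℝ, 0 < ε → ∀ᶠ K in atTop, ∀ x : ℝ, 0 ≤ x →
      1 - ε ≤ condN μ (n+1) {v | SecondLe K v} x := by
    intro ε hε
    set δ : ℝ := ε / ((n:ℝ) + 2) with hδdef
    have hn2 : (0:ℝ) < (n:ℝ) + 2 := by positivity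
    have hδpos : 0 < δ := by positivity
    have h1 : ∀ᶠ K in atTop,
        (1 - δ) < ⨅ x : Set.Ici (0:ℝ), condN μ n {v | SecondLe K v} (x : ℝ) :=
      h.eventually (eventually_gt_nhds (by linarith))
    filter_upwards [h1, eventually_ge_atTop (1:ℝ)] with K hK1 hK2
    intro x hx
    have hcondn : ∀ y : ℝ, 0 ≤ y → 1 - δ ≤ condN μ n {v | SecondLe K v} y := by
      intro y hy
      exact le_of_lt (lt_of_lt_of_le hK1 (ciInf_le (hbdd n K) ⟨y, hy⟩))
    have Hyp : ∀ y : ℝ, 0 ≤ y →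
        (Measure.pi fun _ : Fin n => μ) ({v | SecondLe K v}ᶜ ∩ {v | SumGt y v})
          ≤ ENNReal.ofReal δ * (Measure.pi fun _ : Fin n => μ) {v | SumGt y v} := by
      intro y hy
      exact ratio_to_measure _ (measurableSet_secondLe K)
        (pi_sumGt_pos μ hub (by omega) y).ne' hδpos.le (hcondn y hy)
    have hcore := core μ hnn n hn (by linarith : (0:ℝ) < K)
      ENNReal.ofReal_ne_top Hyp hx
    have hmulle : ((n:ℝ≥0∞)+1) * ENNReal.ofReal δ ≤ ENNReal.ofReal ε := by
      have hcast : ((n:ℝ≥0∞)+1) = ENNReal.ofReal ((n:ℝ)+1) := by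
        rw [ENNReal.ofReal_add (by positivity) zero_le_one]
        simp [ENNReal.ofReal_natCast]
      rw [hcast, ← ENNReal.ofReal_mul (by positivity)]
      apply ENNReal.ofReal_le_ofReal
      have : ((n:ℝ)+1) * δ = ε * (((n:ℝ)+1)/((n:ℝ)+2)) := by
        rw [hδdef]; field_simp
      rw [this]
      calc ε * (((n:ℝ)+1)/((n:ℝ)+2)) ≤ ε * 1 := by
            apply mul_le_mul_of_nonneg_left _ hε.le
            rw [div_le_one hn2]; linarith
        _ = ε := mul_one ε
    have hm2 : (Measure.pi fun _ : Fin (n+1) => μ)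
        ({v | SecondLe K v}ᶜ ∩ {v | SumGt x v})
          ≤ ENNReal.ofReal ε * (Measure.pi fun _ : Fin (n+1) => μ) {v | SumGt x v} := by
      refine hcore.trans ?_
      exact mul_le_mul_left hmulle _
    exact measure_to_ratio _ (measurableSet_secondLe K)
      (pi_sumGt_pos μ hub (by omega) x).ne' hε.le hm2
  rw [tendsto_order]
  constructor
  · intro a ha
    have hε : 0 < (1 - a)/2 := by linarith
    filter_upwards [key _ hε] with K hKmain
    have hlow : 1 - (1-a)/2
        ≤ ⨅ x : Set.Ici (0:ℝ), condN μ (n+1) {v | SecondLe K v} (x : ℝ) :=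
      le_ciInf fun y => hKmain (y : ℝ) y.2
    linarith
  · intro a ha
    refine Filter.Eventually.of_forall fun K => ?_
    have hub1 : (⨅ x : Set.Ici (0:ℝ), condN μ (n+1) {v | SecondLe K v} (x : ℝ))
        ≤ condN μ (n+1) {v | SecondLe K v} 0 :=
      ciInf_le (hbdd (n+1) K) ⟨0, Set.mem_Ici.mpr le_rfl⟩
    have := hcond_le_one (n+1) K 0
    linarith
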